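/- In a discounted MDP, let π be a policy, let U be a nonempty well-defined subset of T^π with |U| = d, and let π' = π ⊕ U. Then there exist d pairwise distinct policies π^(1), …, π^(d) with π ≺ π^(1) ⪯ π^(2) ⪯ … ⪯ π^(d) = π' such that π^(i) and π^(i+1) differ in exactly one state for all 1 ≤ i < d. -/

import Mathlib

/-- The transition matrix induced by a policy. -/
noncomputable def polMatrix {n k : ℕ} (P : Fin n → Fin k → Fin n → ℝ)
    (π : Fin n → Fin k) : Matrix (Fin n) (Fin n) ℝ :=
  Matrix.of fun s s' => P s (π s) s'

/-- The reward vector induced by a policy. -/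
noncomputable def polReward {n k : ℕ} (r : Fin n → Fin k → ℝ)
    (π : Fin n → Fin k) : Fin n → ℝ :=
  fun s => r s (π s)

/-- The value vector of a policy: `v^π = ∑_{i=0}^∞ γ^i (P^π)^i r^π`. -/
noncomputable def polValue {n k : ℕ} (P : Fin n → Fin k → Fin n → ℝ)
    (r : Fin n → Fin k → ℝ) (γ : ℝ) (π : Fin n → Fin k) : Fin n → ℝ :=
  ∑' i : ℕ, γ ^ i • (polMatrix P π ^ i).mulVec (polReward r π)

/-- `π ⪯ π'` : the policy `π'` dominates `π`. -/
def Dominates {n k : ℕ} (P : Fin n → Fin k → Fin n → ℝ) (r : Fin n → Fin k → ℝ)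
    (γ : ℝ) (π π' : Fin n → Fin k) : Prop :=
  ∀ s, polValue P r γ π s ≤ polValue P r γ π' s

/-- `π ≺ π'` : the policy `π'` strictly dominates `π`. -/
def StrictDominates {n k : ℕ} (P : Fin n → Fin k → Fin n → ℝ) (r : Fin n → Fin k → ℝ)
    (γ : ℝ) (π π' : Fin n → Fin k) : Prop :=
  Dominates P r γ π π' ∧ ∃ s, polValue P r γ π s < polValue P r γ π' s

/-- A set of state-action pairs is well-defined if it contains each state at most once. -/
def WellDefined {n k : ℕ} (U : Set (Fin n × Fin k)) : Prop :=
  ∀ s a a', (s, a) ∈ U → (s, a') ∈ U → a = a'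

-- `π ⊕ U` : the policy obtained from `π` by switching the action at `s` to `a`
-- for each `(s, a) ∈ U` (intended for well-defined `U`).
open Classical in
noncomputable def switch {n k : ℕ} (π : Fin n → Fin k) (U : Set (Fin n × Fin k)) :
    Fin n → Fin k :=
  fun s => if h : ∃ a, (s, a) ∈ U then h.choose else π s

/-- The improvement set `T^π = {(s,a) : π ⊕ {(s,a)} ≻ π}`. -/
def improvementSet {n k : ℕ} (P : Fin n → Fin k → Fin n → ℝ) (r : Fin n → Fin k → ℝ)
    (γ : ℝ) (π : Fin n → Fin k) : Set (Fin n × Fin k) :=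
  {p | StrictDominates P r γ π (Function.update π p.1 p.2)}

/-- The set of improvement states `S^π`. -/
def improvementStates {n k : ℕ} (P : Fin n → Fin k → Fin n → ℝ) (r : Fin n → Fin k → ℝ)
    (γ : ℝ) (π : Fin n → Fin k) : Set (Fin n) :=
  {s | ∃ a, (s, a) ∈ improvementSet P r γ π}

section core
variable {n k : ℕ} (P : Fin n → Fin k → Fin n → ℝ) (r : Fin n → Fin k → ℝ) (γ : ℝ)

/-- entries of powers of polMatrix are nonneg, rows sum to 1 -/
lemma pow_nonneg_row (hP0 : ∀ s a s', 0 ≤ P s a s') (hP1 : ∀ s a, ∑ s', P s a s' = 1)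
    (π : Fin n → Fin k) (i : ℕ) :
    (∀ s s', 0 ≤ (polMatrix P π ^ i) s s') ∧ (∀ s, ∑ s', (polMatrix P π ^ i) s s' = 1) := by
  induction i with
  | zero =>
      constructor
      · intro s s'
        simp [Matrix.one_apply]
        positivity
      · intro s
        simp [Matrix.one_apply]
  | succ i ih =>
      have hmul : polMatrix P π ^ (i+1) = polMatrix P π * polMatrix P π ^ i := by
        rw [pow_succ']
      constructor
      · intro s s'
        rw [hmul]
        simp only [Matrix.mul_apply]
        apply Finset.sum_nonneg
        intro t _
        exact mul_nonneg (hP0 s (π s) t) (ih.1 t s')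
      · intro s
        rw [hmul]
        simp only [Matrix.mul_apply]
        rw [Finset.sum_comm]
        calc ∑ t, ∑ s', polMatrix P π s t * (polMatrix P π ^ i) t s'
            = ∑ t, polMatrix P π s t * ∑ s', (polMatrix P π ^ i) t s' := by
              simp [Finset.mul_sum]
          _ = 1 := by
              simp only [ih.2, mul_one]
              exact hP1 s (π s)

lemma mulVec_bound {A : Matrix (Fin n) (Fin n) ℝ}
    (hA0 : ∀ s s', 0 ≤ A s s') (hA1 : ∀ s, ∑ s', A s s' = 1)
    {b : Fin n → ℝ} {C : ℝ} (hb : ∀ s, |b s| ≤ C) (s : Fin n) :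
    |A.mulVec b s| ≤ C := by
  have : |A.mulVec b s| ≤ ∑ s', A s s' * |b s'| := by
    rw [Matrix.mulVec, dotProduct]
    refine (Finset.abs_sum_le_sum_abs _ _).trans ?_
    apply Finset.sum_le_sum
    intro t _
    rw [abs_mul, abs_of_nonneg (hA0 s t)]
  refine this.trans ?_
  calc ∑ s', A s s' * |b s'| ≤ ∑ s', A s s' * C := by
        apply Finset.sum_le_sum
        intro t _
        exact mul_le_mul_of_nonneg_left (hb t) (hA0 s t)
    _ = C := by rw [← Finset.sum_mul, hA1, one_mul]

lemma summable_comp (hP0 : ∀ s a s', 0 ≤ P s a s') (hP1 : ∀ s a, ∑ s', P s a s' = 1)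
    (hγ0 : 0 ≤ γ) (hγ1 : γ < 1) (π : Fin n → Fin k) (s : Fin n) :
    Summable (fun i : ℕ => γ ^ i * ((polMatrix P π ^ i).mulVec (polReward r π)) s) := by
  classical
  obtain ⟨C, hC⟩ : ∃ C, ∀ s', |polReward r π s'| ≤ C := by
    refine ⟨∑ s', |polReward r π s'|, fun s' => Finset.single_le_sum (f := fun t => |polReward r π t|) (fun t _ => abs_nonneg _) (Finset.mem_univ s')⟩
  refine Summable.of_norm_bounded (g := fun i => γ ^ i * C) ?_ ?_
  · exact (summable_geometric_of_lt_one hγ0 hγ1).mul_right C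
  · intro i
    rw [Real.norm_eq_abs, abs_mul, abs_of_nonneg (pow_nonneg hγ0 i)]
    exact mul_le_mul_of_nonneg_left
      (mulVec_bound (pow_nonneg_row P hP0 hP1 π i).1 (pow_nonneg_row P hP0 hP1 π i).2 hC s)
      (pow_nonneg hγ0 i)

lemma polValue_apply (hP0 : ∀ s a s', 0 ≤ P s a s') (hP1 : ∀ s a, ∑ s', P s a s' = 1)
    (hγ0 : 0 ≤ γ) (hγ1 : γ < 1) (π : Fin n → Fin k) (s : Fin n) :
    polValue P r γ π s
      = ∑' i : ℕ, γ ^ i * ((polMatrix P π ^ i).mulVec (polReward r π)) s := by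
  rw [polValue, tsum_apply]
  · simp [Pi.smul_apply, smul_eq_mul]
  · rw [Pi.summable]
    intro t
    have := summable_comp P r γ hP0 hP1 hγ0 hγ1 π t
    simpa [Pi.smul_apply, smul_eq_mul] using this

/-- Bellman equation, componentwise. -/
lemma bellman (hP0 : ∀ s a s', 0 ≤ P s a s') (hP1 : ∀ s a, ∑ s', P s a s' = 1)
    (hγ0 : 0 ≤ γ) (hγ1 : γ < 1) (π : Fin n → Fin k) (s : Fin n) :
    polValue P r γ π s
      = polReward r π s + γ * ((polMatrix P π).mulVec (polValue P r γ π)) s := by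
  classical
  have hsum : ∀ t, Summable (fun i : ℕ => γ ^ i * ((polMatrix P π ^ i).mulVec (polReward r π)) t) :=
    summable_comp P r γ hP0 hP1 hγ0 hγ1 π
  rw [polValue_apply P r γ hP0 hP1 hγ0 hγ1]
  rw [Summable.tsum_eq_zero_add (hsum s)]
  congr 1
  · simp
  · -- ∑' i, γ^(i+1) * ((A^(i+1)).mulVec b) s = γ * (A.mulVec v) s
    have key : ∀ i : ℕ, γ ^ (i+1) * ((polMatrix P π ^ (i+1)).mulVec (polReward r π)) s
        = ∑ t, γ * (polMatrix P π s t * (γ ^ i * ((polMatrix P π ^ i).mulVec (polReward r π)) t)) := by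
      intro i
      have h1 : (polMatrix P π ^ (i+1)).mulVec (polReward r π)
          = (polMatrix P π).mulVec ((polMatrix P π ^ i).mulVec (polReward r π)) := by
        rw [Matrix.mulVec_mulVec, ← pow_succ']
      rw [h1, Matrix.mulVec, dotProduct, Finset.mul_sum]
      apply Finset.sum_congr rfl
      intro t _
      simp only [Matrix.mulVec, dotProduct]
      ring
    calc (∑' i : ℕ, γ ^ (i+1) * ((polMatrix P π ^ (i+1)).mulVec (polReward r π)) s)
        = ∑' i : ℕ, ∑ t, γ * (polMatrix P π s t * (γ ^ i * ((polMatrix P π ^ i).mulVec (polReward r π)) t)) := by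
          exact tsum_congr key
      _ = ∑ t, ∑' i : ℕ, γ * (polMatrix P π s t * (γ ^ i * ((polMatrix P π ^ i).mulVec (polReward r π)) t)) := by
          exact Summable.tsum_finsetSum fun t _ => ((hsum t).mul_left _).mul_left _
          
      _ = γ * ((polMatrix P π).mulVec (polValue P r γ π)) s := by
          rw [Matrix.mulVec, dotProduct, Finset.mul_sum]
          apply Finset.sum_congr rfl
          intro t _
          rw [tsum_mul_left, tsum_mul_left, polValue_apply P r γ hP0 hP1 hγ0 hγ1]

end core

section comp
variable {n k : ℕ} (P : Fin n → Fin k → Fin n → ℝ) (r : Fin n → Fin k → ℝ) (γ : ℝ)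

/-- Comparison lemma: if `x = e + γ A x` with `A` substochastic-nonneg rows and `e ≥ 0`,
then `x ≥ e`. -/
lemma comparison (hn : 1 ≤ n) {A : Matrix (Fin n) (Fin n) ℝ}
    (hA0 : ∀ s s', 0 ≤ A s s') (hA1 : ∀ s, ∑ s', A s s' = 1)
    (hγ0 : 0 ≤ γ) (hγ1 : γ < 1)
    {x e : Fin n → ℝ} (hx : ∀ s, x s = e s + γ * A.mulVec x s)
    (he : ∀ s, 0 ≤ e s) : ∀ s, e s ≤ x s := by
  have hne : (Finset.univ : Finset (Fin n)).Nonempty := ⟨⟨0, hn⟩, Finset.mem_univ _⟩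
  obtain ⟨s0, -, hs0⟩ := Finset.exists_min_image Finset.univ x hne
  have hx0 : 0 ≤ x s0 := by
    have hAx : γ * x s0 ≤ γ * A.mulVec x s0 := by
      apply mul_le_mul_of_nonneg_left _ hγ0
      calc x s0 = ∑ t, A s0 t * x s0 := by rw [← Finset.sum_mul, hA1, one_mul]
        _ ≤ ∑ t, A s0 t * x t := by
            apply Finset.sum_le_sum
            intro t _
            exact mul_le_mul_of_nonneg_left (hs0 t (Finset.mem_univ t)) (hA0 s0 t)
        _ = A.mulVec x s0 := by rw [Matrix.mulVec, dotProduct]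
    have h1 : x s0 ≥ e s0 + γ * x s0 := by linarith [hx s0]
    by_contra hneg
    push_neg at hneg
    have h2 : 0 < (1 - γ) * (-x s0) := mul_pos (by linarith) (by linarith)
    nlinarith [he s0]
  intro s
  have hAx : 0 ≤ A.mulVec x s := by
    rw [Matrix.mulVec, dotProduct]
    apply Finset.sum_nonneg
    intro t _
    exact mul_nonneg (hA0 s t) ((hx0.trans (hs0 t (Finset.mem_univ t))))
  linarith [hx s, mul_nonneg hγ0 hAx]

/-- The difference of two value functions satisfies the fundamental equation. -/
lemma diff_eq (hP0 : ∀ s a s', 0 ≤ P s a s') (hP1 : ∀ s a, ∑ s', P s a s' = 1)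
    (hγ0 : 0 ≤ γ) (hγ1 : γ < 1) (β τ : Fin n → Fin k) (s : Fin n) :
    polValue P r γ τ s - polValue P r γ β s
      = (r s (τ s) + γ * ((polMatrix P τ).mulVec (polValue P r γ β)) s - polValue P r γ β s)
        + γ * ((polMatrix P τ).mulVec (fun t => polValue P r γ τ t - polValue P r γ β t)) s := by
  have hb := bellman P r γ hP0 hP1 hγ0 hγ1 τ s
  simp only [Matrix.mulVec, dotProduct, mul_sub, Finset.sum_sub_distrib] at *
  rw [polReward] at hb
  rw [hb]
  ring

/-- If the one-step lookahead of `τ` on `v^β` dominates `v^β`, then `τ` dominates `β`,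
componentwise by at least the advantage. -/
lemma value_ge (hn : 1 ≤ n) (hP0 : ∀ s a s', 0 ≤ P s a s') (hP1 : ∀ s a, ∑ s', P s a s' = 1)
    (hγ0 : 0 ≤ γ) (hγ1 : γ < 1) (β τ : Fin n → Fin k)
    (he : ∀ s, 0 ≤ r s (τ s) + γ * ((polMatrix P τ).mulVec (polValue P r γ β)) s
          - polValue P r γ β s) :
    ∀ s, r s (τ s) + γ * ((polMatrix P τ).mulVec (polValue P r γ β)) s - polValue P r γ β s
        ≤ polValue P r γ τ s - polValue P r γ β s := by
  refine comparison γ hn (fun s s' => hP0 s (τ s) s') (fun s => hP1 s (τ s)) hγ0 hγ1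
    (fun s => diff_eq P r γ hP0 hP1 hγ0 hγ1 β τ s) he

lemma value_le (hn : 1 ≤ n) (hP0 : ∀ s a s', 0 ≤ P s a s') (hP1 : ∀ s a, ∑ s', P s a s' = 1)
    (hγ0 : 0 ≤ γ) (hγ1 : γ < 1) (β τ : Fin n → Fin k)
    (he : ∀ s, r s (τ s) + γ * ((polMatrix P τ).mulVec (polValue P r γ β)) s
          - polValue P r γ β s ≤ 0) :
    ∀ s, polValue P r γ τ s ≤ polValue P r γ β s := by
  have key := comparison γ hn (fun s s' => hP0 s (τ s) s') (fun s => hP1 s (τ s)) hγ0 hγ1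
    (x := fun t => polValue P r γ β t - polValue P r γ τ t)
    (e := fun t => -(r t (τ t) + γ * ((polMatrix P τ).mulVec (polValue P r γ β)) t
          - polValue P r γ β t))
    ?_ (fun s => by simpa using he s)
  · intro s
    have := key s
    nlinarith [he s]
  · intro s
    have hd := diff_eq P r γ hP0 hP1 hγ0 hγ1 β τ s
    simp only [Matrix.mulVec, dotProduct, mul_sub, Finset.sum_sub_distrib,
      mul_neg, neg_sub, polMatrix, Matrix.of_apply] at *
    linarith

end comp


section switchlem
variable {n k : ℕ}

lemma switch_eq_of_mem {π : Fin n → Fin k} {U : Set (Fin n × Fin k)}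
    (hwd : WellDefined U) {s : Fin n} {a : Fin k} (h : (s, a) ∈ U) :
    switch π U s = a := by
  have hex : ∃ a', (s, a') ∈ U := ⟨a, h⟩
  simp only [switch, dif_pos hex]
  exact hwd s _ a hex.choose_spec h

lemma switch_eq_of_not_mem {π : Fin n → Fin k} {U : Set (Fin n × Fin k)}
    {s : Fin n} (h : ∀ a, (s, a) ∉ U) : switch π U s = π s := by
  simp only [switch, dif_neg (not_exists.mpr h)]

lemma switch_singleton (π : Fin n → Fin k) (s : Fin n) (a : Fin k) :
    switch π {(s, a)} = Function.update π s a := by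
  funext t
  by_cases ht : t = s
  · subst ht
    rw [switch_eq_of_mem (U := {(t, a)}) ?_ rfl, Function.update_self]
    intro s' b b' hb hb'
    simp only [Set.mem_singleton_iff, Prod.mk.injEq] at hb hb'
    rw [hb.2, hb'.2]
  · rw [Function.update_of_ne ht]
    apply switch_eq_of_not_mem
    intro b hb
    simp only [Set.mem_singleton_iff, Prod.mk.injEq] at hb
    exact ht hb.1

end switchlem

section improve
variable {n k : ℕ} (P : Fin n → Fin k → Fin n → ℝ) (r : Fin n → Fin k → ℝ) (γ : ℝ)

lemma memT_ne {π : Fin n → Fin k} {s : Fin n} {a : Fin k}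
    (h : (s, a) ∈ improvementSet P r γ π) : a ≠ π s := by
  intro heq
  subst heq
  rw [improvementSet, Set.mem_setOf_eq, Function.update_eq_self] at h
  obtain ⟨-, s0, hlt⟩ := h
  exact lt_irrefl _ hlt

lemma memT_gt (hn : 1 ≤ n) (hP0 : ∀ s a s', 0 ≤ P s a s') (hP1 : ∀ s a, ∑ s', P s a s' = 1)
    (hγ0 : 0 ≤ γ) (hγ1 : γ < 1) {π : Fin n → Fin k} {s : Fin n} {a : Fin k}
    (h : (s, a) ∈ improvementSet P r γ π) :
    polValue P r γ π s < r s a + γ * ∑ t, P s a t * polValue P r γ π t := by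
  by_contra hc
  push_neg at hc
  set τ := Function.update π s a with hτ
  have hdom : ∀ t, polValue P r γ τ t ≤ polValue P r γ π t := by
    apply value_le P r γ hn hP0 hP1 hγ0 hγ1
    intro t
    by_cases ht : t = s
    · subst ht
      have : τ t = a := Function.update_self t a π
      rw [this]
      simp only [Matrix.mulVec, dotProduct, polMatrix, Matrix.of_apply, this]
      linarith
    · have hττ : τ t = π t := Function.update_of_ne ht a π
      have hb := bellman P r γ hP0 hP1 hγ0 hγ1 π t
      simp only [Matrix.mulVec, dotProduct, polMatrix, Matrix.of_apply, hττ] at *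
      rw [polReward] at hb
      linarith
  obtain ⟨-, s0, hlt⟩ := h
  exact absurd (hdom s0) (not_le.mpr hlt)

end improve

section peel
variable {n k : ℕ} (P : Fin n → Fin k → Fin n → ℝ) (r : Fin n → Fin k → ℝ) (γ : ℝ)

lemma wd_mono {U U' : Set (Fin n × Fin k)} (h : U ⊆ U') (h' : WellDefined U') :
    WellDefined U := fun s a a' ha ha' => h' s a a' (h ha) (h ha')

lemma peel (hn : 1 ≤ n) (hP0 : ∀ s a s', 0 ≤ P s a s') (hP1 : ∀ s a, ∑ s', P s a s' = 1)
    (hγ0 : 0 ≤ γ) (hγ1 : γ < 1) (π : Fin n → Fin k) (V : Finset (Fin n × Fin k))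
    (hne : V.Nonempty) (hwd : WellDefined (↑V : Set (Fin n × Fin k)))
    (hsub : (↑V : Set (Fin n × Fin k)) ⊆ improvementSet P r γ π) :
    ∃ p ∈ V, Dominates P r γ (switch π (↑(V.erase p) : Set (Fin n × Fin k)))
      (switch π (↑V : Set (Fin n × Fin k))) := by
  classical
  set ν := switch π (↑V : Set (Fin n × Fin k)) with hν
  have hbellν : ∀ t, polValue P r γ ν t
      = r t (ν t) + γ * ∑ u, P t (ν t) u * polValue P r γ ν u := by
    intro t
    have hb := bellman P r γ hP0 hP1 hγ0 hγ1 ν t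
    simpa [polReward, polMatrix, Matrix.mulVec, dotProduct] using hb
  have hbellπ : ∀ t, polValue P r γ π t
      = r t (π t) + γ * ∑ u, P t (π t) u * polValue P r γ π u := by
    intro t
    have hb := bellman P r γ hP0 hP1 hγ0 hγ1 π t
    simpa [polReward, polMatrix, Matrix.mulVec, dotProduct] using hb
  -- first: v^ν ≥ v^π
  have hπν : ∀ t, polValue P r γ π t ≤ polValue P r γ ν t := by
    have he : ∀ t, 0 ≤ r t (ν t) + γ * ((polMatrix P ν).mulVec (polValue P r γ π)) t
        - polValue P r γ π t := by
      intro t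
      simp only [polMatrix, Matrix.mulVec, dotProduct, Matrix.of_apply]
      by_cases ht : ∃ a, (t, a) ∈ (↑V : Set (Fin n × Fin k))
      · obtain ⟨a, ha⟩ := ht
        have hνt : ν t = a := switch_eq_of_mem hwd ha
        rw [hνt]
        have := memT_gt P r γ hn hP0 hP1 hγ0 hγ1 (hsub ha)
        linarith
      · push_neg at ht
        have hνt : ν t = π t := switch_eq_of_not_mem ht
        rw [hνt]
        linarith [hbellπ t]
    intro t
    linarith [value_ge P r γ hn hP0 hP1 hγ0 hγ1 π ν he t, he t]
  -- key claim : some p ∈ V can be unswitched without gain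
  have hclaim : ∃ p ∈ V, r p.1 (π p.1) + γ * ∑ u, P p.1 (π p.1) u * polValue P r γ ν u
      ≤ polValue P r γ ν p.1 := by
    by_contra hc
    push_neg at hc
    -- then π strictly dominates ν at states of V, contradiction
    have hkey := value_ge P r γ hn hP0 hP1 hγ0 hγ1 ν π ?_
    · obtain ⟨⟨s0, a0⟩, hp0⟩ := hne
      have h1 := hkey s0
      have h2 := hc (s0, a0) hp0
      simp only [polMatrix, Matrix.mulVec, dotProduct, Matrix.of_apply] at h1
      have := hπν s0
      linarith
    · intro t
      simp only [polMatrix, Matrix.mulVec, dotProduct, Matrix.of_apply]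
      by_cases ht : ∃ a, (t, a) ∈ (↑V : Set (Fin n × Fin k))
      · obtain ⟨a, ha⟩ := ht
        have := hc (t, a) (Finset.mem_coe.mp ha)
        simp only at this
        linarith
      · push_neg at ht
        have hνt : ν t = π t := switch_eq_of_not_mem ht
        have := hbellν t
        rw [hνt] at this
        linarith
  obtain ⟨⟨s, a⟩, hpV, hple⟩ := hclaim
  refine ⟨(s, a), hpV, ?_⟩
  set μ := switch π (↑(V.erase (s, a)) : Set (Fin n × Fin k)) with hμ
  have hwd' : WellDefined (↑(V.erase (s, a)) : Set (Fin n × Fin k)) :=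
    wd_mono (by exact_mod_cast Finset.coe_subset.mpr (Finset.erase_subset _ _)) hwd
  have hμs : μ s = π s := by
    apply switch_eq_of_not_mem
    intro b hb
    have hbV : (s, b) ∈ V := Finset.mem_of_mem_erase (Finset.mem_coe.mp hb)
    have : b = a := hwd s b a hbV hpV
    subst this
    exact Finset.notMem_erase _ _ (Finset.mem_coe.mp hb)
  have hμt : ∀ t, t ≠ s → μ t = ν t := by
    intro t ht
    rw [hμ, hν]
    by_cases hex : ∃ b, (t, b) ∈ (↑V : Set (Fin n × Fin k))
    · obtain ⟨b, hb⟩ := hex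
      have hb' : (t, b) ∈ (↑(V.erase (s, a)) : Set (Fin n × Fin k)) := by
        refine Finset.mem_coe.mpr (Finset.mem_erase.mpr ⟨?_, Finset.mem_coe.mp hb⟩)
        simp only [ne_eq, Prod.mk.injEq, not_and]
        intro h; exact absurd h ht
      rw [switch_eq_of_mem hwd' hb', switch_eq_of_mem hwd hb]
    · push_neg at hex
      have hex' : ∀ b, (t, b) ∉ (↑(V.erase (s, a)) : Set (Fin n × Fin k)) := by
        intro b hb
        exact hex b (Finset.mem_coe.mpr (Finset.mem_of_mem_erase (Finset.mem_coe.mp hb)))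
      rw [switch_eq_of_not_mem hex, switch_eq_of_not_mem hex']
  -- apply value_le with base ν, other μ
  intro t
  refine value_le P r γ hn hP0 hP1 hγ0 hγ1 ν μ ?_ t
  intro u
  simp only [polMatrix, Matrix.mulVec, dotProduct, Matrix.of_apply]
  by_cases hu : u = s
  · subst hu
    rw [hμs]
    simp only at hple
    linarith
  · rw [hμt u hu]
    linarith [hbellν u]

end peel

section aux
variable {n k : ℕ} (P : Fin n → Fin k → Fin n → ℝ) (r : Fin n → Fin k → ℝ) (γ : ℝ)

lemma chain_aux (hn : 1 ≤ n) (hP0 : ∀ s a s', 0 ≤ P s a s')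
    (hP1 : ∀ s a, ∑ s', P s a s' = 1) (hγ0 : 0 ≤ γ) (hγ1 : γ < 1) (π : Fin n → Fin k) :
    ∀ d : ℕ, ∀ U : Finset (Fin n × Fin k), U.card = d → 0 < d →
    WellDefined (↑U : Set (Fin n × Fin k)) →
    (↑U : Set (Fin n × Fin k)) ⊆ improvementSet P r γ π →
    ∃ V : ℕ → Finset (Fin n × Fin k),
      (∀ i, i < d → (V i).card = i + 1) ∧
      (∀ i, i + 1 < d → V i ⊆ V (i + 1)) ∧
      (∀ i, i < d → V i ⊆ U) ∧
      V (d - 1) = U ∧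
      (∀ i, i + 1 < d → Dominates P r γ (switch π (↑(V i) : Set (Fin n × Fin k)))
        (switch π (↑(V (i + 1)) : Set (Fin n × Fin k)))) := by
  intro d
  induction d with
  | zero => intro U _ h0; exact absurd h0 (lt_irrefl 0)
  | succ d ih =>
    intro U hcard _ hwd hsub
    by_cases hd : d = 0
    · subst hd
      refine ⟨fun _ => U, ?_, ?_, ?_, rfl, ?_⟩
      · intro i hi
        have : i = 0 := by omega
        subst this
        simpa using hcard
      · intro i hi; omega
      · intro i _; exact subset_rfl
      · intro i hi; omega
    · have hdpos : 0 < d := Nat.pos_of_ne_zero hd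
      have hneU : U.Nonempty := Finset.card_pos.mp (by omega)
      obtain ⟨p, hpU, hdom⟩ := peel P r γ hn hP0 hP1 hγ0 hγ1 π U hneU hwd hsub
      have hcard' : (U.erase p).card = d := by
        rw [Finset.card_erase_of_mem hpU, hcard]
        omega
      have hsubU' : U.erase p ⊆ U := Finset.erase_subset _ _
      have hwd' : WellDefined (↑(U.erase p) : Set (Fin n × Fin k)) :=
        wd_mono (Finset.coe_subset.mpr hsubU') hwd
      have hsub' : (↑(U.erase p) : Set (Fin n × Fin k)) ⊆ improvementSet P r γ π :=
        fun q hq => hsub (Finset.coe_subset.mpr hsubU' hq)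
      obtain ⟨V', h1, h2, h3, h4, h5⟩ := ih (U.erase p) hcard' hdpos hwd' hsub'
      refine ⟨fun i => if i < d then V' i else U, ?_, ?_, ?_, ?_, ?_⟩
      · intro i hi
        by_cases h : i < d
        · simpa [h] using h1 i h
        · have hieq : i = d := by omega
          simp [h, hieq, hcard]
      · intro i hi
        by_cases h : i + 1 < d
        · have hi' : i < d := by omega
          simpa [hi', h] using h2 i h
        · have hi' : i < d := by omega
          have hnot : ¬ (i + 1 < d) := h
          simp only [if_pos hi', if_neg hnot]
          exact (h3 i hi').trans hsubU'
      · intro i hi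
        by_cases h : i < d
        · simp only [if_pos h]
          exact (h3 i h).trans hsubU'
        · simp only [if_neg h]
          exact subset_rfl
      · simp only [Nat.add_sub_cancel]
        rw [if_neg (lt_irrefl d)]
      · intro i hi
        by_cases h : i + 1 < d
        · have hi' : i < d := by omega
          simpa only [if_pos hi', if_pos h] using h5 i h
        · have hi' : i < d := by omega
          have hVi : V' i = U.erase p := by
            have : i = d - 1 := by omega
            rw [this, h4]
          simp only [if_pos hi', if_neg h, hVi]
          exact hdom

end aux

lemma subset_chain {α : Type*} {d : ℕ} {V : ℕ → Finset α}
    (h : ∀ i, i + 1 < d → V i ⊆ V (i + 1)) :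
    ∀ i j, i ≤ j → j < d → V i ⊆ V j := by
  intro i j hij hj
  induction j with
  | zero =>
      have : i = 0 := by omega
      subst this; exact subset_rfl
  | succ j ihj =>
      rcases Nat.lt_or_ge i (j + 1) with hlt | hge
      · exact (ihj (by omega) (by omega)).trans (h j hj)
      · have : i = j + 1 := by omega
        subst this; exact subset_rfl


set_option maxHeartbeats 1000000 in
theorem path_of_neighbors (n k : ℕ) (hn : 1 ≤ n) (hk : 1 ≤ k)
    (P : Fin n → Fin k → Fin n → ℝ) (r : Fin n → Fin k → ℝ) (γ : ℝ)
    (hP0 : ∀ s a s', 0 ≤ P s a s') (hP1 : ∀ s a, ∑ s', P s a s' = 1)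
    (hγ0 : 0 ≤ γ) (hγ1 : γ < 1)
    (π : Fin n → Fin k) (U : Finset (Fin n × Fin k)) (d : ℕ)
    (hne : U.Nonempty) (hwd : WellDefined (↑U : Set (Fin n × Fin k)))
    (hsub : (↑U : Set (Fin n × Fin k)) ⊆ improvementSet P r γ π)
    (hcard : U.card = d)
    (π' : Fin n → Fin k) (hπ' : π' = switch π (↑U : Set (Fin n × Fin k))) :
    ∃ ρ : Fin d → Fin n → Fin k,
      Function.Injective ρ ∧
      (∀ h0 : 0 < d, StrictDominates P r γ π (ρ ⟨0, h0⟩)) ∧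
      (∀ i : ℕ, ∀ hi : i + 1 < d,
        Dominates P r γ (ρ ⟨i, Nat.lt_of_succ_lt hi⟩) (ρ ⟨i + 1, hi⟩) ∧
        (Finset.univ.filter
          fun s => ρ ⟨i, Nat.lt_of_succ_lt hi⟩ s ≠ ρ ⟨i + 1, hi⟩ s).card = 1) ∧
      (∀ hl : d - 1 < d, ρ ⟨d - 1, hl⟩ = π') := by
  classical
  have hd0 : 0 < d := hcard ▸ Finset.card_pos.mpr hne
  obtain ⟨V, hVcard, hVsub1, hVsubU, hVlast, hVdom⟩ :=
    chain_aux P r γ hn hP0 hP1 hγ0 hγ1 π d U hcard hd0 hwd hsub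
  have hmono := subset_chain hVsub1
  have hWD : ∀ i, i < d → WellDefined (↑(V i) : Set (Fin n × Fin k)) :=
    fun i hi => wd_mono (Finset.coe_subset.mpr (hVsubU i hi)) hwd
  refine ⟨fun i => switch π (↑(V i.val) : Set (Fin n × Fin k)), ?_, ?_, ?_, ?_⟩
  · -- injectivity
    have hlt_ne : ∀ (i j : Fin d), i.val < j.val →
        switch π (↑(V i.val) : Set (Fin n × Fin k)) ≠ switch π (↑(V j.val) : Set (Fin n × Fin k)) := by
      intro i j hij
      have hsub_ij : V i.val ⊆ V j.val := hmono _ _ (le_of_lt hij) j.isLt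
      have hdiffne : (V j.val \ V i.val).Nonempty := by
        rw [Finset.sdiff_nonempty]
        intro hsubji
        have h1 := Finset.card_le_card hsubji
        rw [hVcard i.val i.isLt, hVcard j.val j.isLt] at h1
        omega
      obtain ⟨⟨s, a⟩, hp⟩ := hdiffne
      rw [Finset.mem_sdiff] at hp
      have hρj : switch π (↑(V j.val) : Set (Fin n × Fin k)) s = a :=
        switch_eq_of_mem (hWD j.val j.isLt) (Finset.mem_coe.mpr hp.1)
      have hnot : ∀ b, (s, b) ∉ (↑(V i.val) : Set (Fin n × Fin k)) := by
        intro b hb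
        have hbj : (s, b) ∈ V j.val := hsub_ij (Finset.mem_coe.mp hb)
        have : b = a := hWD j.val j.isLt s b a (Finset.mem_coe.mpr hbj) (Finset.mem_coe.mpr hp.1)
        subst this
        exact hp.2 (Finset.mem_coe.mp hb)
      have hρi : switch π (↑(V i.val) : Set (Fin n × Fin k)) s = π s :=
        switch_eq_of_not_mem hnot
      have hane : a ≠ π s :=
        memT_ne P r γ (hsub (Finset.mem_coe.mpr (hVsubU j.val j.isLt hp.1)))
      intro heq
      apply hane
      rw [← hρj, ← heq, hρi]
    intro i j heq
    by_contra hne'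
    rcases lt_trichotomy i j with h | h | h
    · exact hlt_ne i j h heq
    · exact hne' h
    · exact hlt_ne j i h heq.symm
  · -- strict dominance at step 0
    intro h0
    obtain ⟨⟨s, a⟩, hV0⟩ := Finset.card_eq_one.mp (hVcard 0 h0)
    have hmem : (s, a) ∈ U := hVsubU 0 h0 (hV0 ▸ Finset.mem_singleton_self _)
    have heq : (fun (i : Fin d) => switch π (↑(V i.val) : Set (Fin n × Fin k))) ⟨0, h0⟩
        = Function.update π s a := by
      show switch π (↑(V 0) : Set (Fin n × Fin k)) = _
      rw [hV0, Finset.coe_singleton, switch_singleton]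
    rw [heq]
    have h2 := hsub (Finset.mem_coe.mpr hmem)
    simp only [improvementSet, Set.mem_setOf_eq] at h2
    exact h2
  · -- consecutive steps
    intro i hi
    have hii : i < d := Nat.lt_of_succ_lt hi
    refine ⟨hVdom i hi, ?_⟩
    have hsub_ij : V i ⊆ V (i + 1) := hVsub1 i hi
    have hdiffne : (V (i + 1) \ V i).Nonempty := by
      rw [Finset.sdiff_nonempty]
      intro hsubji
      have h1 := Finset.card_le_card hsubji
      rw [hVcard i hii, hVcard (i + 1) hi] at h1
      omega
    obtain ⟨⟨s, a⟩, hp⟩ := hdiffne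
    rw [Finset.mem_sdiff] at hp
    have hins : insert (s, a) (V i) = V (i + 1) := by
      apply Finset.eq_of_subset_of_card_le (Finset.insert_subset hp.1 hsub_ij)
      rw [Finset.card_insert_of_notMem hp.2, hVcard i hii, hVcard (i + 1) hi]
    have hnot : ∀ b, (s, b) ∉ (↑(V i) : Set (Fin n × Fin k)) := by
      intro b hb
      have hbj : (s, b) ∈ V (i + 1) := hsub_ij (Finset.mem_coe.mp hb)
      have : b = a := hWD (i + 1) hi s b a (Finset.mem_coe.mpr hbj) (Finset.mem_coe.mpr hp.1)
      subst this
      exact hp.2 (Finset.mem_coe.mp hb)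
    have hρi : switch π (↑(V i) : Set (Fin n × Fin k)) s = π s := switch_eq_of_not_mem hnot
    have hρj : switch π (↑(V (i + 1)) : Set (Fin n × Fin k)) s = a :=
      switch_eq_of_mem (hWD (i + 1) hi) (Finset.mem_coe.mpr hp.1)
    have hane : a ≠ π s :=
      memT_ne P r γ (hsub (Finset.mem_coe.mpr (hVsubU (i + 1) hi hp.1)))
    have hfilter : (Finset.univ.filter
        fun t => switch π (↑(V i) : Set (Fin n × Fin k)) t
          ≠ switch π (↑(V (i + 1)) : Set (Fin n × Fin k)) t) = {s} := by
      ext t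
      simp only [Finset.mem_filter, Finset.mem_univ, true_and, Finset.mem_singleton]
      constructor
      · intro hdiff
        by_contra hts
        apply hdiff
        by_cases hex : ∃ b, (t, b) ∈ (↑(V i) : Set (Fin n × Fin k))
        · obtain ⟨b, hb⟩ := hex
          have hb' : (t, b) ∈ (↑(V (i + 1)) : Set (Fin n × Fin k)) :=
            Finset.mem_coe.mpr (hsub_ij (Finset.mem_coe.mp hb))
          rw [switch_eq_of_mem (hWD i hii) hb, switch_eq_of_mem (hWD (i + 1) hi) hb']
        · push_neg at hex
          have hex' : ∀ b, (t, b) ∉ (↑(V (i + 1)) : Set (Fin n × Fin k)) := by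
            intro b hb
            have := Finset.mem_coe.mp hb
            rw [← hins, Finset.mem_insert] at this
            rcases this with h' | h'
            · exact hts (congrArg Prod.fst h')
            · exact hex b (Finset.mem_coe.mpr h')
          rw [switch_eq_of_not_mem hex, switch_eq_of_not_mem hex']
      · intro hts
        subst hts
        rw [hρi, hρj]
        exact fun h => hane h.symm
    rw [hfilter, Finset.card_singleton]
  · -- last policy
    intro hl
    subst hπ'
    show switch π (↑(V (d - 1)) : Set (Fin n × Fin k)) = switch π (↑U : Set (Fin n × Fin k))
    rw [hVlast]
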